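/- (Infinite-time average equals the diagonal ensemble for a nondegenerate Hamiltonian.) Let E be a finite-dimensional complex inner product space, let H : E → E be a self-adjoint linear map, let (Ψ_j) be an orthonormal basis of E and (E_j) real numbers with H Ψ_j = E_j Ψ_j for all j, and assume the E_j are pairwise distinct (nondegenerate spectrum). Then for every linear map A : E → E and every vector ψ ∈ E, the time average (1/T)·∫₀^T ⟨exp(−itH)ψ, A exp(−itH)ψ⟩ dt converges, as T → ∞, to Σ_j |⟨Ψ_j, ψ⟩|² · ⟨Ψ_j, A Ψ_j⟩. -/

import Mathlib

open scoped InnerProductSpace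

lemma exp_eigen_aux {E : Type*} [NormedAddCommGroup E] [InnerProductSpace ℂ E]
    [FiniteDimensional ℂ E] (H : E →L[ℂ] E) (z μ : ℂ) (v : E) (hv : H v = μ • v) :
    NormedSpace.exp (z • H) v = Complex.exp (z * μ) • v := by
  have hpow : ∀ n : ℕ, ((z • H) ^ n) v = (z * μ) ^ n • v := by
    intro n
    induction n with
    | zero => simp
    | succ n ih =>
      simp only [pow_succ', ContinuousLinearMap.mul_apply, ih, map_smul,
        ContinuousLinearMap.smul_apply, hv, smul_smul]
      congr 1
      ring
  have hsum := NormedSpace.expSeries_summable' (𝕂 := ℂ) (z • H)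
  have h1 : NormedSpace.exp (z • H) v
      = ∑' n : ℕ, (((n.factorial : ℂ)⁻¹) • (z • H) ^ n) v := by
    rw [NormedSpace.exp_eq_tsum ℂ]
    exact ((ContinuousLinearMap.apply ℂ E v).map_tsum hsum).symm ▸ rfl
  rw [h1]
  have h2 : ∀ n : ℕ, (((n.factorial : ℂ)⁻¹) • (z • H) ^ n) v
      = ((n.factorial : ℂ)⁻¹ * (z * μ) ^ n) • v := by
    intro n
    rw [ContinuousLinearMap.smul_apply, hpow, smul_smul]
  simp only [h2]
  have hsum2 : Summable fun n : ℕ => (n.factorial : ℂ)⁻¹ * (z * μ) ^ n := by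
    simpa [smul_eq_mul] using NormedSpace.expSeries_summable' (𝕂 := ℂ) (z * μ)
  rw [hsum2.tsum_smul_const, Complex.exp_eq_exp_ℂ, NormedSpace.exp_eq_tsum ℂ]
  simp [smul_eq_mul]

open Filter

/-- For a nondegenerate self-adjoint Hamiltonian `H` on a finite-dimensional
complex inner product space, the infinite-time average of the expectation value
`⟨exp(−itH)ψ, A exp(−itH)ψ⟩` of any observable `A` equals the diagonal-ensemble
value `∑_j |⟨Ψ_j, ψ⟩|² ⟨Ψ_j, A Ψ_j⟩`. -/
theorem time_average_eq_diagonal_ensemble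
    {E : Type*} [NormedAddCommGroup E] [InnerProductSpace ℂ E]
    [FiniteDimensional ℂ E]
    {ι : Type*} [Fintype ι]
    (H A : E →L[ℂ] E)
    (hH : ∀ x y : E, ⟪H x, y⟫_ℂ = ⟪x, H y⟫_ℂ)
    (Ψ : OrthonormalBasis ι ℂ E) (Ej : ι → ℝ)
    (heig : ∀ j, H (Ψ j) = (Ej j : ℂ) • Ψ j)
    (hnondeg : Function.Injective Ej)
    (ψ : E) :
    Filter.Tendsto
      (fun T : ℝ => (1 / (T : ℂ)) *
        ∫ t in (0)..T,
          ⟪NormedSpace.exp ((-(Complex.I * t)) • H) ψ,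
            A (NormedSpace.exp ((-(Complex.I * t)) • H) ψ)⟫_ℂ)
      Filter.atTop
      (nhds (∑ j, (‖⟪Ψ j, ψ⟫_ℂ‖ ^ 2 : ℂ) * ⟪Ψ j, A (Ψ j)⟫_ℂ)) := by
  classical
  set c : ι → ℂ := fun j => ⟪Ψ j, ψ⟫_ℂ with hc
  set M : ι → ι → ℂ := fun j k => (starRingEnd ℂ) (c j) * c k * ⟪Ψ j, A (Ψ k)⟫_ℂ with hM
  set ω : ι → ι → ℝ := fun j k => Ej j - Ej k with hω
  -- expansion of the evolved state
  have hstate : ∀ t : ℝ, NormedSpace.exp ((-(Complex.I * t)) • H) ψ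
      = ∑ j, (Complex.exp (-(Complex.I * t) * Ej j) * c j) • Ψ j := by
    intro t
    conv_lhs => rw [← Ψ.sum_repr' ψ]
    rw [map_sum]
    refine Finset.sum_congr rfl fun j _ => ?_
    rw [map_smul, exp_eigen_aux H _ _ _ (heig j), smul_smul, mul_comm]
  -- expansion of the integrand
  have hinner : ∀ t : ℝ,
      ⟪NormedSpace.exp ((-(Complex.I * t)) • H) ψ,
        A (NormedSpace.exp ((-(Complex.I * t)) • H) ψ)⟫_ℂ
      = ∑ j, ∑ k, M j k * Complex.exp (Complex.I * (ω j k) * t) := by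
    intro t
    rw [hstate t, map_sum, sum_inner]
    refine Finset.sum_congr rfl fun j _ => ?_
    rw [inner_sum]
    refine Finset.sum_congr rfl fun k _ => ?_
    rw [map_smul, inner_smul_left, inner_smul_right]
    rw [map_mul]
    have h1 : (starRingEnd ℂ) (Complex.exp (-(Complex.I * t) * Ej j))
        = Complex.exp (Complex.I * t * Ej j) := by
      rw [← Complex.exp_conj]
      congr 1
      simp [Complex.conj_ofReal]
    rw [h1]
    simp only [hM]
    have h2 : Complex.exp (Complex.I * t * Ej j) * Complex.exp (-(Complex.I * t) * Ej k)
        = Complex.exp (Complex.I * (ω j k) * t) := by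
      rw [← Complex.exp_add]
      congr 1
      simp only [hω, Complex.ofReal_sub]
      ring
    calc Complex.exp (Complex.I * ↑t * ↑(Ej j)) * (starRingEnd ℂ) (c j) *
          (Complex.exp (-(Complex.I * ↑t) * ↑(Ej k)) * c k * ⟪Ψ j, A (Ψ k)⟫_ℂ)
        = ((starRingEnd ℂ) (c j) * c k * ⟪Ψ j, A (Ψ k)⟫_ℂ) *
          (Complex.exp (Complex.I * t * Ej j) * Complex.exp (-(Complex.I * t) * Ej k)) := by
          ring
      _ = _ := by rw [h2]
  -- pull the sums out of the integral
  have hcont : ∀ (j k : ι), Continuous fun t : ℝ =>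
      M j k * Complex.exp (Complex.I * (ω j k) * t) := by
    intro j k
    exact continuous_const.mul (Complex.continuous_exp.comp
      (continuous_const.mul Complex.continuous_ofReal))
  have hint : ∀ T : ℝ,
      (∫ t in (0:ℝ)..T,
        ⟪NormedSpace.exp ((-(Complex.I * t)) • H) ψ,
          A (NormedSpace.exp ((-(Complex.I * t)) • H) ψ)⟫_ℂ)
      = ∑ j, ∑ k, M j k * ∫ t in (0:ℝ)..T, Complex.exp (Complex.I * (ω j k) * t) := by
    intro T
    simp only [hinner]
    rw [intervalIntegral.integral_finset_sum]
    · refine Finset.sum_congr rfl fun j _ => ?_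
      rw [intervalIntegral.integral_finset_sum]
      · exact Finset.sum_congr rfl fun k _ => intervalIntegral.integral_const_mul _ _
      · exact fun k _ => (hcont j k).intervalIntegrable _ _
    · exact fun j _ => (Continuous.intervalIntegrable (by
        exact continuous_finset_sum _ fun k _ => hcont j k) _ _)
  -- limit of each averaged phase factor
  have hG : ∀ j k : ι, Filter.Tendsto
      (fun T : ℝ => (1 / (T : ℂ)) * ∫ t in (0:ℝ)..T, Complex.exp (Complex.I * (ω j k) * t))
      Filter.atTop (nhds (if j = k then 1 else 0)) := by
    intro j k
    by_cases h : j = k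
    · subst h
      simp only [if_pos rfl]
      have hω0 : ω j j = 0 := sub_self _
      have heq : ∀ᶠ T : ℝ in atTop,
          (1 / (T : ℂ)) * ∫ t in (0:ℝ)..T, Complex.exp (Complex.I * (ω j j) * t) = 1 := by
        filter_upwards [eventually_gt_atTop (0:ℝ)] with T hT
        have : ∀ t : ℝ, Complex.exp (Complex.I * (ω j j) * t) = 1 := by
          intro t; rw [hω0]; simp
        simp only [this, intervalIntegral.integral_const, sub_zero, Complex.real_smul,
          mul_one]
        rw [one_div, inv_mul_cancel₀ (by exact_mod_cast hT.ne' : (T:ℂ) ≠ 0)]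
      exact Filter.Tendsto.congr' (Filter.EventuallyEq.symm heq) tendsto_const_nhds
    · simp only [if_neg h]
      have hωne : ω j k ≠ 0 := sub_ne_zero.2 fun hEq => h (hnondeg hEq)
      have hcne : Complex.I * (ω j k : ℂ) ≠ 0 :=
        mul_ne_zero Complex.I_ne_zero (by exact_mod_cast hωne)
      have hval : ∀ T : ℝ, (∫ t in (0:ℝ)..T, Complex.exp (Complex.I * (ω j k) * t))
          = (Complex.exp (Complex.I * (ω j k) * T) - 1) / (Complex.I * (ω j k)) := by
        intro T
        have : ∀ t : ℝ, Complex.I * (ω j k : ℂ) * (t : ℂ)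
            = (Complex.I * (ω j k : ℂ)) * (t : ℂ) := fun t => rfl
        rw [show (fun t : ℝ => Complex.exp (Complex.I * (ω j k) * t))
            = fun t : ℝ => Complex.exp ((Complex.I * (ω j k)) * t) from rfl]
        rw [integral_exp_mul_complex hcne]
        simp
      refine squeeze_zero_norm'
        (a := fun T : ℝ => (2 / ‖Complex.I * ((ω j k : ℝ) : ℂ)‖) * (1 / T)) ?_ ?_
      · filter_upwards [eventually_gt_atTop (0:ℝ)] with T hT
        rw [hval T, norm_mul]
        have hnT : ‖(1 / (T : ℂ))‖ = 1 / T := by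
          rw [norm_div, norm_one, Complex.norm_real, Real.norm_eq_abs, abs_of_pos hT]
          
        have hb : ‖Complex.exp (Complex.I * (ω j k) * T) - 1‖ ≤ 2 := by
          refine (norm_sub_le _ _).trans ?_
          have : ‖Complex.exp (Complex.I * (ω j k) * T)‖ = 1 := by
            rw [Complex.norm_exp]
            simp [Complex.mul_re]
          rw [this, norm_one]; norm_num
        rw [hnT, norm_div]
        calc (1 / T) * (‖Complex.exp (Complex.I * (ω j k) * T) - 1‖ /
              ‖Complex.I * ((ω j k : ℝ) : ℂ)‖)
            ≤ (1 / T) * (2 / ‖Complex.I * ((ω j k : ℝ) : ℂ)‖) := by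
              gcongr
          _ = (2 / ‖Complex.I * ((ω j k : ℝ) : ℂ)‖) * (1 / T) := by ring
      · have : Filter.Tendsto (fun T : ℝ => T⁻¹) atTop (nhds 0) := tendsto_inv_atTop_zero
        simpa [one_div, mul_zero] using this.const_mul (2 / ‖Complex.I * ((ω j k : ℝ) : ℂ)‖)
  -- combine
  have hfinal : Filter.Tendsto
      (fun T : ℝ => ∑ j, ∑ k, M j k *
        ((1 / (T : ℂ)) * ∫ t in (0:ℝ)..T, Complex.exp (Complex.I * (ω j k) * t)))
      Filter.atTop (nhds (∑ j, ∑ k, M j k * (if j = k then 1 else 0))) :=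
    tendsto_finset_sum _ fun j _ => tendsto_finset_sum _ fun k _ => (hG j k).const_mul (M j k)
  have hsum_eq : (∑ j, ∑ k, M j k * (if j = k then 1 else 0))
      = ∑ j, (‖⟪Ψ j, ψ⟫_ℂ‖ ^ 2 : ℂ) * ⟪Ψ j, A (Ψ j)⟫_ℂ := by
    refine Finset.sum_congr rfl fun j _ => ?_
    rw [Finset.sum_eq_single j]
    · rw [if_pos rfl, mul_one]
      simp only [hM, hc, RCLike.conj_mul, Complex.ofReal_pow]
      norm_cast
    · intro k _ hk
      rw [if_neg (Ne.symm hk), mul_zero]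
    · intro hj; exact absurd (Finset.mem_univ j) hj
  rw [← hsum_eq]
  refine Filter.Tendsto.congr' ?_ hfinal
  refine Filter.Eventually.of_forall fun T => ?_
  simp only [hint T, Finset.mul_sum]
  refine Finset.sum_congr rfl fun j _ => Finset.sum_congr rfl fun k _ => by ring
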